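/- Let q and q' be unital quantum channels on M_n admitting unitary matrix 1-dilations U ∈ Matrix (Fin n × Fin m) (Fin n × Fin m) ℂ and U' ∈ Matrix (Fin n × Fin m') (Fin n × Fin m') ℂ respectively, i.e. U, U' are unitary with ptr_m(U * (A ⊗ I_m) * Uᴴ) = q(A) and ptr_{m'}(U' * (A ⊗ I_{m'}) * U'ᴴ) = q'(A) for all A ∈ M_n. In Matrix (Fin n × Fin m × Fin m') (Fin n × Fin m × Fin m') ℂ, let U'_{13} be U' acting on the first and third factors, (U'_{13}) ((a,k,l),(b,k',l')) = δ_{k,k'} · U' ((a,l),(b,l')), and let U_{12} = U ⊗ I_{m'}. Then W := U'_{13} * U_{12} is unitary and for all A ∈ M_n: (1/(m·m')) · Σ_{k,l} (W * (A ⊗ I_{m·m'}) * Wᴴ) ((a,k,l),(b,k,l)) = (q'(q(A))) a b. In particular the composition q' ∘ q is matrix factorizable. -/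

import Mathlib

open Matrix
open scoped Kronecker

private lemma kron_ct {α β : Type*} (A : Matrix α α ℂ) (B : Matrix β β ℂ) :
    (A ⊗ₖ B)ᴴ = Aᴴ ⊗ₖ Bᴴ := by
  ext ⟨i, j⟩ ⟨k, l⟩
  simp [conjTranspose_apply, mul_comm]

/-- compositions of matrix factorizable channels are matrix factorizable:
given unitary 1-dilations `U` of `q` (on `Mₙ ⊗ M_m`) and `U'` of `q'` (on `Mₙ ⊗ M_{m'}`),
the unitary `W = U'₁₃ · U₁₂` on `Mₙ ⊗ M_m ⊗ M_{m'}` is a matrix 1-dilation of `q' ∘ q`. -/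
theorem composition_matrix_factorizable
    (n m m' p p' : ℕ) [NeZero n] [NeZero m] [NeZero m']
    (q q' : Matrix (Fin n) (Fin n) ℂ → Matrix (Fin n) (Fin n) ℂ)
    (qk : Fin p → Matrix (Fin n) (Fin n) ℂ)
    (hq : ∀ A, q A = ∑ k, qk k * A * (qk k)ᴴ)
    (hq_unital : ∑ k, qk k * (qk k)ᴴ = 1)
    (hq_tp : ∑ k, (qk k)ᴴ * qk k = 1)
    (qk' : Fin p' → Matrix (Fin n) (Fin n) ℂ)
    (hq' : ∀ A, q' A = ∑ k, qk' k * A * (qk' k)ᴴ)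
    (hq'_unital : ∑ k, qk' k * (qk' k)ᴴ = 1)
    (hq'_tp : ∑ k, (qk' k)ᴴ * qk' k = 1)
    (U : Matrix (Fin n × Fin m) (Fin n × Fin m) ℂ)
    (hU_unitary : U * Uᴴ = 1 ∧ Uᴴ * U = 1)
    (hU_dil : ∀ (A : Matrix (Fin n) (Fin n) ℂ) (i j : Fin n),
      (1 / (m : ℂ)) * ∑ k : Fin m,
          (U * (A ⊗ₖ (1 : Matrix (Fin m) (Fin m) ℂ)) * Uᴴ) (i, k) (j, k) = q A i j)
    (U' : Matrix (Fin n × Fin m') (Fin n × Fin m') ℂ)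
    (hU'_unitary : U' * U'ᴴ = 1 ∧ U'ᴴ * U' = 1)
    (hU'_dil : ∀ (A : Matrix (Fin n) (Fin n) ℂ) (i j : Fin n),
      (1 / (m' : ℂ)) * ∑ k : Fin m',
          (U' * (A ⊗ₖ (1 : Matrix (Fin m') (Fin m') ℂ)) * U'ᴴ) (i, k) (j, k) = q' A i j)
    -- `U'₁₃`: `U'` acting on the first and third tensor factors
    (U13 : Matrix (Fin n × Fin m × Fin m') (Fin n × Fin m × Fin m') ℂ)
    (hU13 : ∀ (a b : Fin n) (k k' : Fin m) (l l' : Fin m'),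
      U13 (a, k, l) (b, k', l') = (if k = k' then (1 : ℂ) else 0) * U' (a, l) (b, l'))
    -- `U₁₂ = U ⊗ I_{m'}`: `U` acting on the first and second tensor factors
    (U12 : Matrix (Fin n × Fin m × Fin m') (Fin n × Fin m × Fin m') ℂ)
    (hU12 : ∀ (a b : Fin n) (k k' : Fin m) (l l' : Fin m'),
      U12 (a, k, l) (b, k', l') = U (a, k) (b, k') * (if l = l' then (1 : ℂ) else 0)) :
    ((U13 * U12) * (U13 * U12)ᴴ = 1 ∧ (U13 * U12)ᴴ * (U13 * U12) = 1) ∧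
    ∀ (A : Matrix (Fin n) (Fin n) ℂ) (a b : Fin n),
      (1 / ((m : ℂ) * (m' : ℂ))) * ∑ k : Fin m, ∑ l : Fin m',
          ((U13 * U12) * (A ⊗ₖ (1 : Matrix (Fin m × Fin m') (Fin m × Fin m') ℂ))
              * (U13 * U12)ᴴ) (a, k, l) (b, k, l)
        = q' (q A) a b := by
  have hm : (m : ℂ) ≠ 0 := Nat.cast_ne_zero.mpr (NeZero.ne m)
  have hm' : (m' : ℂ) ≠ 0 := Nat.cast_ne_zero.mpr (NeZero.ne m')
  -- reindexing equivalences
  let e₁ : Fin n × Fin m × Fin m' ≃ (Fin n × Fin m') × Fin m :=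
    ⟨fun x => ((x.1, x.2.2), x.2.1), fun y => (y.1.1, y.2, y.1.2),
      fun x => rfl, fun y => rfl⟩
  let e₂ : Fin n × Fin m × Fin m' ≃ (Fin n × Fin m) × Fin m' :=
    (Equiv.prodAssoc _ _ _).symm
  have hU13eq : U13 = (U' ⊗ₖ (1 : Matrix (Fin m) (Fin m) ℂ)).submatrix e₁ e₁ := by
    ext ⟨a, k, l⟩ ⟨b, k', l'⟩
    simp [hU13, e₁, Matrix.one_apply, mul_comm]
  have hU12eq : U12 = (U ⊗ₖ (1 : Matrix (Fin m') (Fin m') ℂ)).submatrix e₂ e₂ := by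
    ext ⟨a, k, l⟩ ⟨b, k', l'⟩
    simp [hU12, e₂, Matrix.one_apply, Equiv.prodAssoc]
  -- unitarity of U13
  have h13a : U13 * U13ᴴ = 1 := by
    rw [hU13eq, conjTranspose_submatrix, kron_ct, conjTranspose_one,
      submatrix_mul_equiv, ← mul_kronecker_mul, hU'_unitary.1, one_mul,
      one_kronecker_one, submatrix_one_equiv]
  have h13b : U13ᴴ * U13 = 1 := by
    rw [hU13eq, conjTranspose_submatrix, kron_ct, conjTranspose_one,
      submatrix_mul_equiv, ← mul_kronecker_mul, hU'_unitary.2, one_mul,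
      one_kronecker_one, submatrix_one_equiv]
  have h12a : U12 * U12ᴴ = 1 := by
    rw [hU12eq, conjTranspose_submatrix, kron_ct, conjTranspose_one,
      submatrix_mul_equiv, ← mul_kronecker_mul, hU_unitary.1, one_mul,
      one_kronecker_one, submatrix_one_equiv]
  have h12b : U12ᴴ * U12 = 1 := by
    rw [hU12eq, conjTranspose_submatrix, kron_ct, conjTranspose_one,
      submatrix_mul_equiv, ← mul_kronecker_mul, hU_unitary.2, one_mul,
      one_kronecker_one, submatrix_one_equiv]
  refine ⟨⟨?_, ?_⟩, ?_⟩
  · rw [conjTranspose_mul, Matrix.mul_assoc, ← Matrix.mul_assoc U12, h12a,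
      Matrix.one_mul, h13a]
  · rw [conjTranspose_mul, Matrix.mul_assoc, ← Matrix.mul_assoc U13ᴴ, h13b,
      Matrix.one_mul, h12b]
  · intro A a b
    set B : Matrix (Fin n × Fin m) (Fin n × Fin m) ℂ :=
      U * (A ⊗ₖ (1 : Matrix (Fin m) (Fin m) ℂ)) * Uᴴ with hB
    -- middle conjugation
    have hA1 : (A ⊗ₖ (1 : Matrix (Fin m × Fin m') (Fin m × Fin m') ℂ))
        = ((A ⊗ₖ (1 : Matrix (Fin m) (Fin m) ℂ))
            ⊗ₖ (1 : Matrix (Fin m') (Fin m') ℂ)).submatrix e₂ e₂ := by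
      ext ⟨a', k, l⟩ ⟨b', k', l'⟩
      by_cases hk : k = k' <;> by_cases hl : l = l' <;>
        simp [hk, hl, Matrix.one_apply, Prod.ext_iff, e₂, Equiv.prodAssoc]
    have hMid : U12 * (A ⊗ₖ (1 : Matrix (Fin m × Fin m') (Fin m × Fin m') ℂ)) * U12ᴴ
        = (B ⊗ₖ (1 : Matrix (Fin m') (Fin m') ℂ)).submatrix e₂ e₂ := by
      rw [hU12eq, hA1, conjTranspose_submatrix, kron_ct, conjTranspose_one,
        submatrix_mul_equiv, submatrix_mul_equiv, ← mul_kronecker_mul,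
        ← mul_kronecker_mul, one_mul, one_mul, hB]
    have hW : (U13 * U12) * (A ⊗ₖ (1 : Matrix (Fin m × Fin m') (Fin m × Fin m') ℂ))
          * (U13 * U12)ᴴ
        = U13 * ((B ⊗ₖ (1 : Matrix (Fin m') (Fin m') ℂ)).submatrix e₂ e₂) * U13ᴴ := by
      rw [conjTranspose_mul, ← hMid]
      simp only [Matrix.mul_assoc]
    -- entry formula for B part
    have hM13 : ∀ (c c' : Fin n) (j j' : Fin m) (r r' : Fin m'),
        ((B ⊗ₖ (1 : Matrix (Fin m') (Fin m') ℂ)).submatrix e₂ e₂) (c, j, r) (c', j', r')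
          = B (c, j) (c', j') * (if r = r' then (1 : ℂ) else 0) := by
      intro c c' j j' r r'
      simp [e₂, Matrix.one_apply, Equiv.prodAssoc]
    have key : ∀ (k : Fin m) (l : Fin m'),
        (U13 * ((B ⊗ₖ (1 : Matrix (Fin m') (Fin m') ℂ)).submatrix e₂ e₂) * U13ᴴ)
            (a, k, l) (b, k, l)
          = ∑ r : Fin m', ∑ c : Fin n, ∑ c' : Fin n,
              U' (a, l) (c, r) * B (c, k) (c', k) * star (U' (b, l) (c', r)) := by
      intro k l
      simp only [Matrix.mul_apply, conjTranspose_apply, Fintype.sum_prod_type, hU13, hM13]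
      simp [Finset.mul_sum, Finset.sum_mul, mul_ite, ite_mul, mul_zero, zero_mul,
        star_mul', apply_ite (starRingEnd ℂ), map_zero, mul_comm, mul_assoc, mul_left_comm]
      rw [Finset.sum_comm]
      exact Finset.sum_congr rfl fun r _ => Finset.sum_comm
    -- entry formula for the target channel
    have key2 : ∀ l : Fin m',
        (U' * ((q A) ⊗ₖ (1 : Matrix (Fin m') (Fin m') ℂ)) * U'ᴴ) (a, l) (b, l)
          = ∑ r : Fin m', ∑ c : Fin n, ∑ c' : Fin n,
              U' (a, l) (c, r) * q A c c' * star (U' (b, l) (c', r)) := by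
      intro l
      simp only [Matrix.mul_apply, conjTranspose_apply, Fintype.sum_prod_type,
        kroneckerMap_apply, Matrix.one_apply]
      simp [Finset.mul_sum, Finset.sum_mul, mul_ite, ite_mul, mul_zero, zero_mul,
        star_mul', apply_ite (starRingEnd ℂ), map_zero, mul_comm, mul_assoc, mul_left_comm]
      rw [Finset.sum_comm]
      exact Finset.sum_congr rfl fun r _ => Finset.sum_comm
    have hBsum : ∀ c c' : Fin n, ∑ k : Fin m, B (c, k) (c', k) = (m : ℂ) * q A c c' := by
      intro c c'
      have h := hU_dil A c c'
      rw [← hB] at h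
      field_simp at h
      rw [h]
    have main : ∀ l : Fin m',
        ∑ k : Fin m, ∑ r : Fin m', ∑ c : Fin n, ∑ c' : Fin n,
            U' (a, l) (c, r) * B (c, k) (c', k) * star (U' (b, l) (c', r))
          = (m : ℂ) * (U' * ((q A) ⊗ₖ (1 : Matrix (Fin m') (Fin m') ℂ)) * U'ᴴ)
              (a, l) (b, l) := by
      intro l
      rw [key2 l, Finset.sum_comm, Finset.mul_sum]
      refine Finset.sum_congr rfl fun r _ => ?_
      rw [Finset.sum_comm, Finset.mul_sum]
      refine Finset.sum_congr rfl fun c _ => ?_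
      rw [Finset.sum_comm, Finset.mul_sum]
      refine Finset.sum_congr rfl fun c' _ => ?_
      calc ∑ k : Fin m, U' (a, l) (c, r) * B (c, k) (c', k) * star (U' (b, l) (c', r))
          = U' (a, l) (c, r) * (∑ k : Fin m, B (c, k) (c', k)) * star (U' (b, l) (c', r)) := by
            rw [Finset.mul_sum, Finset.sum_mul]
        _ = _ := by rw [hBsum c c']; ring
    rw [hW]
    have hsum : ∑ k : Fin m, ∑ l : Fin m',
        (U13 * ((B ⊗ₖ (1 : Matrix (Fin m') (Fin m') ℂ)).submatrix e₂ e₂) * U13ᴴ)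
          (a, k, l) (b, k, l)
        = (m : ℂ) * ∑ l : Fin m',
            (U' * ((q A) ⊗ₖ (1 : Matrix (Fin m') (Fin m') ℂ)) * U'ᴴ) (a, l) (b, l) := by
      simp only [key]
      rw [Finset.sum_comm, Finset.mul_sum]
      exact Finset.sum_congr rfl fun l _ => main l
    rw [hsum, ← hU'_dil (q A) a b]
    field_simp
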